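/- The superfidelity is concave in its second argument: for density matrices ρ₁, ρ₂, ρ₃ and α ∈ [0,1], G(ρ₁, α·ρ₂ + (1-α)·ρ₃) ≥ α·G(ρ₁,ρ₂) + (1-α)·G(ρ₁,ρ₃). -/

import Mathlib

open Matrix ComplexOrder

lemma aux_real_key (t₂ t₃ m α : ℝ) (h2a : 0 ≤ t₂) (h2b : t₂ ≤ 1) (h3a : 0 ≤ t₃) (h3b : t₃ ≤ 1)
    (hm : m ≤ Real.sqrt t₂ * Real.sqrt t₃) (hα0 : 0 ≤ α) (hα1 : α ≤ 1) :
    α * Real.sqrt (1 - t₂) + (1 - α) * Real.sqrt (1 - t₃) ≤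
      Real.sqrt (1 - (α^2*t₂ + 2*α*(1-α)*m + (1-α)^2*t₃)) := by
  have ha2 : Real.sqrt (1 - t₂) ^ 2 = 1 - t₂ := Real.sq_sqrt (by linarith)
  have hb2 : Real.sqrt (1 - t₃) ^ 2 = 1 - t₃ := Real.sq_sqrt (by linarith)
  have hc2 : Real.sqrt t₂ ^ 2 = t₂ := Real.sq_sqrt h2a
  have hd2 : Real.sqrt t₃ ^ 2 = t₃ := Real.sq_sqrt h3a
  have ha0 := Real.sqrt_nonneg (1 - t₂)
  have hb0 := Real.sqrt_nonneg (1 - t₃)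
  have hc0 := Real.sqrt_nonneg t₂
  have hd0 := Real.sqrt_nonneg t₃
  have hkey : Real.sqrt (1 - t₂) * Real.sqrt (1 - t₃) + Real.sqrt t₂ * Real.sqrt t₃ ≤ 1 := by
    nlinarith [sq_nonneg (Real.sqrt (1 - t₂) - Real.sqrt (1 - t₃)),
      sq_nonneg (Real.sqrt t₂ - Real.sqrt t₃)]
  have hαα : 0 ≤ α * (1 - α) := mul_nonneg hα0 (by linarith)
  rw [show (α * Real.sqrt (1 - t₂) + (1 - α) * Real.sqrt (1 - t₃)) =
      Real.sqrt ((α * Real.sqrt (1 - t₂) + (1 - α) * Real.sqrt (1 - t₃))^2) from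
      (Real.sqrt_sq (add_nonneg (mul_nonneg hα0 ha0) (mul_nonneg (by linarith) hb0))).symm]
  apply Real.sqrt_le_sqrt
  nlinarith [mul_le_mul_of_nonneg_left (by nlinarith : m + Real.sqrt (1 - t₂) * Real.sqrt (1 - t₃) ≤ 1) hαα]

lemma aux_tr_sq_nonneg {N : ℕ} (A : Matrix (Fin N) (Fin N) ℂ) (hA : A.IsHermitian) :
    0 ≤ (trace (A * A)).re := by
  set x : EuclideanSpace ℂ (Fin N × Fin N) := WithLp.toLp 2 (fun p : Fin N × Fin N => A p.1 p.2) with hx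
  have hAc : ∀ i j, A j i = starRingEnd ℂ (A i j) := by
    intro i j; conv_lhs => rw [← hA]
    simp [conjTranspose_apply]
  have hxe : trace (A * A) = inner ℂ x x := by
    rw [trace, PiLp.inner_apply, Fintype.sum_prod_type]
    simp only [diag_apply, mul_apply, RCLike.inner_apply]
    congr 1; ext i; congr 1; ext j
    rw [hAc i j]
  rw [hxe]
  exact inner_self_nonneg (𝕜 := ℂ) (E := EuclideanSpace ℂ (Fin N × Fin N))

lemma aux_cs {N : ℕ} (A B : Matrix (Fin N) (Fin N) ℂ) (hA : A.IsHermitian) (hB : B.IsHermitian) :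
    (trace (A * B)).re ≤ Real.sqrt (trace (A * A)).re * Real.sqrt (trace (B * B)).re := by
  set x : EuclideanSpace ℂ (Fin N × Fin N) := WithLp.toLp 2 (fun p : Fin N × Fin N => A p.1 p.2) with hx
  set y : EuclideanSpace ℂ (Fin N × Fin N) := WithLp.toLp 2 (fun p : Fin N × Fin N => B p.1 p.2) with hy
  have hBc : ∀ i j, B j i = starRingEnd ℂ (B i j) := by
    intro i j; conv_lhs => rw [← hB]
    simp [conjTranspose_apply]
  have htr : trace (A * B) = inner ℂ y x := by
    rw [trace, PiLp.inner_apply, Fintype.sum_prod_type]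
    simp only [diag_apply, mul_apply, RCLike.inner_apply]
    congr 1; ext i; congr 1; ext j
    rw [hBc i j]
  have hAc : ∀ i j, A j i = starRingEnd ℂ (A i j) := by
    intro i j; conv_lhs => rw [← hA]
    simp [conjTranspose_apply]
  have hxe : trace (A * A) = inner ℂ x x := by
    rw [trace, PiLp.inner_apply, Fintype.sum_prod_type]
    simp only [diag_apply, mul_apply, RCLike.inner_apply]
    congr 1; ext i; congr 1; ext j
    rw [hAc i j]
  have hye : trace (B * B) = inner ℂ y y := by
    rw [trace, PiLp.inner_apply, Fintype.sum_prod_type]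
    simp only [diag_apply, mul_apply, RCLike.inner_apply]
    congr 1; ext i; congr 1; ext j
    rw [hBc i j]
  have hxx : (trace (A * A)).re = ‖x‖^2 := by
    rw [hxe, ← @inner_self_eq_norm_sq ℂ]; rfl
  have hyy : (trace (B * B)).re = ‖y‖^2 := by
    rw [hye, ← @inner_self_eq_norm_sq ℂ]; rfl
  calc (trace (A * B)).re = RCLike.re (inner ℂ y x : ℂ) := by rw [htr]; rfl
    _ ≤ ‖y‖ * ‖x‖ := re_inner_le_norm y x
    _ = Real.sqrt (trace (A * A)).re * Real.sqrt (trace (B * B)).re := by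
        rw [hxx, hyy, Real.sqrt_sq (norm_nonneg _), Real.sqrt_sq (norm_nonneg _)]
        ring

lemma aux_tr_sq_le_one {N : ℕ} (ρ : Matrix (Fin N) (Fin N) ℂ) (h : ρ.PosSemidef)
    (ht : trace ρ = 1) : (trace (ρ * ρ)).re ≤ 1 := by
  have hH := h.1
  have hspec := hH.spectral_theorem
  rw [Unitary.conjStarAlgAut_apply] at hspec
  set U : Matrix (Fin N) (Fin N) ℂ := (hH.eigenvectorUnitary : Matrix (Fin N) (Fin N) ℂ) with hU
  have hUU : star U * U = 1 := by
    simpa [hU] using congrArg Subtype.val (unitary.star_mul_self hH.eigenvectorUnitary)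
  set D := diagonal (RCLike.ofReal ∘ hH.eigenvalues : Fin N → ℂ) with hD
  have h1 : trace ρ = ∑ i, (hH.eigenvalues i : ℂ) := by
    conv_lhs => rw [hspec]
    rw [trace_mul_cycle, hUU, one_mul, hD, trace_diagonal]
    simp
  have h2 : trace (ρ * ρ) = ∑ i, ((hH.eigenvalues i : ℂ))^2 := by
    conv_lhs => rw [hspec]
    have e : (U * D * star U) * (U * D * star U) = U * (D * D) * star U := by
      simp only [← mul_assoc]
      rw [mul_assoc (U*D) (star U) U, hUU, mul_one, mul_assoc U D D]
    rw [e, trace_mul_cycle, hUU, one_mul, hD, diagonal_mul_diagonal, trace_diagonal]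
    simp [sq]
  have hsum : ∑ i, hH.eigenvalues i = 1 := by
    have := h1.symm.trans ht
    exact_mod_cast this
  have h2' : (trace (ρ * ρ)).re = ∑ i, (hH.eigenvalues i)^2 := by
    rw [h2, Complex.re_sum]
    simp [← Complex.ofReal_pow]
  rw [h2']
  calc ∑ i, (hH.eigenvalues i)^2 ≤ (∑ i, hH.eigenvalues i)^2 :=
        Finset.sum_sq_le_sq_sum_of_nonneg (fun i _ => h.eigenvalues_nonneg i)
    _ = 1 := by rw [hsum]; norm_num

noncomputable def sG {N : ℕ} (ρ σ : Matrix (Fin N) (Fin N) ℂ) : ℝ :=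
  (trace (ρ * σ)).re +
    Real.sqrt (1 - (trace (ρ * ρ)).re) * Real.sqrt (1 - (trace (σ * σ)).re)

theorem superfidelity_concave {N : ℕ} (ρ₁ ρ₂ ρ₃ : Matrix (Fin N) (Fin N) ℂ)
    (h₁ : ρ₁.PosSemidef) (h₂ : ρ₂.PosSemidef) (h₃ : ρ₃.PosSemidef)
    (ht₁ : trace ρ₁ = 1) (ht₂ : trace ρ₂ = 1) (ht₃ : trace ρ₃ = 1)
    (α : ℝ) (hα0 : 0 ≤ α) (hα1 : α ≤ 1) :
    α * sG ρ₁ ρ₂ + (1 - α) * sG ρ₁ ρ₃ ≤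
      sG ρ₁ ((α : ℂ) • ρ₂ + ((1 - α : ℝ) : ℂ) • ρ₃) := by
  set σ : Matrix (Fin N) (Fin N) ℂ := (α : ℂ) • ρ₂ + ((1 - α : ℝ) : ℂ) • ρ₃ with hσ
  set t₁ := (trace (ρ₁ * ρ₁)).re with ht1d
  set t₂ := (trace (ρ₂ * ρ₂)).re with ht2d
  set t₃ := (trace (ρ₃ * ρ₃)).re with ht3d
  set m := (trace (ρ₂ * ρ₃)).re with hmd
  have hσ1 : (trace (ρ₁ * σ)).re = α * (trace (ρ₁ * ρ₂)).re + (1 - α) * (trace (ρ₁ * ρ₃)).re := by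
    rw [hσ, mul_add, mul_smul_comm, mul_smul_comm, trace_add, trace_smul, trace_smul]
    simp [Complex.add_re, Complex.smul_re]
  have hcross : trace (ρ₃ * ρ₂) = trace (ρ₂ * ρ₃) := trace_mul_comm ρ₃ ρ₂
  have hσ2 : (trace (σ * σ)).re = α^2 * t₂ + 2*α*(1-α)*m + (1-α)^2 * t₃ := by
    have e : trace (σ * σ) = ((α^2 : ℝ) : ℂ) * trace (ρ₂ * ρ₂)
        + ((2*α*(1-α) : ℝ) : ℂ) * trace (ρ₂ * ρ₃) + (((1-α)^2 : ℝ) : ℂ) * trace (ρ₃ * ρ₃) := by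
      rw [hσ, add_mul, mul_add, mul_add, smul_mul_smul_comm, smul_mul_smul_comm,
        smul_mul_smul_comm, smul_mul_smul_comm, trace_add, trace_add, trace_add,
        trace_smul, trace_smul, trace_smul, trace_smul, hcross]
      simp only [smul_eq_mul]
      push_cast
      ring
    rw [e]
    simp only [Complex.add_re, Complex.re_ofReal_mul]
    rfl
  have h2a : 0 ≤ t₂ := aux_tr_sq_nonneg ρ₂ h₂.1
  have h3a : 0 ≤ t₃ := aux_tr_sq_nonneg ρ₃ h₃.1
  have h2b : t₂ ≤ 1 := aux_tr_sq_le_one ρ₂ h₂ ht₂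
  have h3b : t₃ ≤ 1 := aux_tr_sq_le_one ρ₃ h₃ ht₃
  have hm : m ≤ Real.sqrt t₂ * Real.sqrt t₃ := aux_cs ρ₂ ρ₃ h₂.1 h₃.1
  have key := aux_real_key t₂ t₃ m α h2a h2b h3a h3b hm hα0 hα1
  have key2 := mul_le_mul_of_nonneg_left key (Real.sqrt_nonneg (1 - t₁))
  simp only [sG, hσ1, hσ2]
  nlinarith [key2]
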